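/- Let n ≥ 2, m ≥ 3, and let P be an m-th order, n-dimensional stochastic tensor on S = {1,…,n}. If P is ergodic, then all ever-reaching probabilities equal one: f_{i1 i2 … i_m} = 1 for all i1,…,i_m ∈ S. -/
import Mathlib


open Finset

/-- An `m`-th order, `n`-dimensional tensor with `m = r + 2`: the entry
`p_{i₁ i₂ … i_m}` is written `P i₁ t`, where `t = (i₂, …, i_m)` is the tail of
`m - 1 = r + 1` indices. -/
abbrev HOTensor (n r : ℕ) := Fin n → (Fin (r + 1) → Fin n) → ℝ

/-- `P` is a stochastic tensor. -/
def IsStochasticT {n r : ℕ} (P : HOTensor n r) : Prop :=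
  (∀ i t, 0 ≤ P i t ∧ P i t ≤ 1) ∧ ∀ t, ∑ i : Fin n, P i t = 1

/-- The product `A ⊠ B`:
`(A ⊠ B)_{i₁ i₂ … i_m} = Σ_j a_{i₁ j i₂ … i_{m-1}} b_{j i₂ … i_m}`. -/
def tmul {n r : ℕ} (A B : HOTensor n r) : HOTensor n r :=
  fun i t => ∑ j : Fin n, A i (Fin.cons j (Fin.init t)) * B j t

/-- Tensor powers: `tpow P k` is `P^k`, with entries the `k`-step transition
probabilities `p^{(k)}_{i₁ … i_m}`; `P^0` is the identity tensor. -/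
def tpow {n r : ℕ} (P : HOTensor n r) : ℕ → HOTensor n r
  | 0 => fun i t => if i = t 0 then 1 else 0
  | k + 1 => tmul (tpow P k) P

/-- `fpp P k` is the `(k+1)`-step first passage probability tensor `F^{[k+1]}`:
`f^{[1]} = p`, and `f^{[k+1]}_{i₁ i₂ … i_m} = Σ_{j ≠ i₁} f^{[k]}_{i₁ j i₂ … i_{m-1}} p_{j i₂ … i_m}`. -/
def fpp {n r : ℕ} (P : HOTensor n r) : ℕ → HOTensor n r
  | 0 => P
  | k + 1 => fun i t =>
      ∑ j ∈ Finset.univ.filter (fun j => j ≠ i), fpp P k i (Fin.cons j (Fin.init t)) * P j t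

/-- The ever-reaching probability `f_{i₁ i₂ … i_m} = Σ_{k=1}^∞ f^{[k]}_{i₁ i₂ … i_m}`. -/
noncomputable def everReach {n r : ℕ} (P : HOTensor n r) : HOTensor n r :=
  fun i t => ∑' k : ℕ, fpp P k i t

/-- State `j` is reachable from state `i` (`i → j`): for every choice of
`i₃, …, i_m` there is `k ≥ 0` with `p^{(k)}_{j i i₃ … i_m} > 0`. -/
def Reach {n r : ℕ} (P : HOTensor n r) (i j : Fin n) : Prop :=
  ∀ u : Fin r → Fin n, ∃ k : ℕ, 0 < tpow P k j (Fin.cons i u)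

/-- States `i` and `j` communicate (`i ↔ j`). -/
def Comm {n r : ℕ} (P : HOTensor n r) (i j : Fin n) : Prop :=
  Reach P i j ∧ Reach P j i

/-- State `i` is recurrent: `f_{i i i₃ … i_m} = 1` for all `i₃, …, i_m`. -/
def RecurrentState {n r : ℕ} (P : HOTensor n r) (i : Fin n) : Prop :=
  ∀ u : Fin r → Fin n, everReach P i (Fin.cons i u) = 1

/-- State `i` is fully transient: `f_{i i i₃ … i_m} < 1` for all `i₃, …, i_m`. -/
def FullyTransientState {n r : ℕ} (P : HOTensor n r) (i : Fin n) : Prop :=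
  ∀ u : Fin r → Fin n, everReach P i (Fin.cons i u) < 1

/-- `P` is ergodic: for all indices there is `k ≥ 1` with `p^{(k)}_{i₁ … i_m} > 0`. -/
def ErgodicT {n r : ℕ} (P : HOTensor n r) : Prop :=
  ∀ (i : Fin n) (t : Fin (r + 1) → Fin n), ∃ k : ℕ, 1 ≤ k ∧ 0 < tpow P k i t

/-- `P` is regular: some power `P^k`, `k ≥ 1`, has all entries positive. -/
def RegularT {n r : ℕ} (P : HOTensor n r) : Prop :=
  ∃ k : ℕ, 1 ≤ k ∧ ∀ (i : Fin n) (t : Fin (r + 1) → Fin n), 0 < tpow P k i t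

/-- The reduced transition matrix `Q` of `P`: rows and columns are indexed by
`(m-1)`-tuples; the entry in row `(i₁, …, i_{m-1})` and column `(j₁, …, j_{m-1})`
is `p_{i₁ i₂ … i_{m-1} j_{m-1}}` if `j_ℓ = i_{ℓ+1}` for `ℓ = 1, …, m-2`, else `0`. -/
def reducedT {n r : ℕ} (P : HOTensor n r) :
    Matrix (Fin (r + 1) → Fin n) (Fin (r + 1) → Fin n) ℝ :=
  fun u v =>
    if ∀ ℓ : Fin r, v ℓ.castSucc = u ℓ.succ then
      P (u 0) (Fin.snoc (Fin.tail u) (v (Fin.last r)))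
    else 0

section Aux

variable {n r : ℕ}

/-- Probability of avoiding state `i` during the first `k` steps. -/
def NoHit (P : HOTensor n r) : ℕ → HOTensor n r
  | 0 => fun _ _ => 1
  | k + 1 => fun i t =>
      ∑ j ∈ Finset.univ.filter (fun j => j ≠ i),
        P j t * NoHit P k i (Fin.cons j (Fin.init t))

variable {P : HOTensor n r} (hP : IsStochasticT P)

lemma sum_filter_ne (i : Fin n) (f : Fin n → ℝ) :
    ∑ j ∈ Finset.univ.filter (fun j => j ≠ i), f j = (∑ j : Fin n, f j) - f i := by
  rw [Finset.filter_ne', eq_sub_iff_add_eq, Finset.sum_erase_add _ _ (Finset.mem_univ i)]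

include hP

lemma tpow_nonneg : ∀ k i t, 0 ≤ tpow P k i t := by
  intro k
  induction k with
  | zero => intro i t; simp only [tpow]; positivity
  | succ k ih =>
      intro i t
      simp only [tpow, tmul]
      exact Finset.sum_nonneg fun j _ => mul_nonneg (ih _ _) (hP.1 j t).1

lemma tpow_sum_one : ∀ k t, ∑ i : Fin n, tpow P k i t = 1 := by
  intro k
  induction k with
  | zero => intro t; simp [tpow]
  | succ k ih =>
      intro t
      simp only [tpow, tmul]
      rw [Finset.sum_comm]
      have : ∀ j : Fin n, ∑ i : Fin n, tpow P k i (Fin.cons j (Fin.init t)) * P j t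
          = P j t := by
        intro j
        rw [← Finset.sum_mul, ih, one_mul]
      simp only [this]
      exact hP.2 t

lemma tpow_le_one : ∀ k i t, tpow P k i t ≤ 1 := by
  intro k i t
  calc tpow P k i t ≤ ∑ i' : Fin n, tpow P k i' t :=
        Finset.single_le_sum (fun i' _ => tpow_nonneg hP k i' t) (Finset.mem_univ i)
    _ = 1 := tpow_sum_one hP k t

lemma NoHit_nonneg : ∀ k i t, 0 ≤ NoHit P k i t := by
  intro k
  induction k with
  | zero => intro i t; simp [NoHit]
  | succ k ih =>
      intro i t
      exact Finset.sum_nonneg fun j _ => mul_nonneg (hP.1 j t).1 (ih _ _)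

lemma sum_ne_le_one (i : Fin n) (t : Fin (r + 1) → Fin n) :
    ∑ j ∈ Finset.univ.filter (fun j => j ≠ i), P j t ≤ 1 := by
  rw [sum_filter_ne, hP.2 t]
  linarith [(hP.1 i t).1]

lemma NoHit_le_one : ∀ k i t, NoHit P k i t ≤ 1 := by
  intro k
  induction k with
  | zero => intro i t; simp [NoHit]
  | succ k ih =>
      intro i t
      calc ∑ j ∈ Finset.univ.filter (fun j => j ≠ i),
              P j t * NoHit P k i (Fin.cons j (Fin.init t))
          ≤ ∑ j ∈ Finset.univ.filter (fun j => j ≠ i), P j t := by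
            refine Finset.sum_le_sum fun j _ => ?_
            calc P j t * NoHit P k i (Fin.cons j (Fin.init t))
                ≤ P j t * 1 := by
                  exact mul_le_mul_of_nonneg_left (ih _ _) (hP.1 j t).1
              _ = P j t := mul_one _
        _ ≤ 1 := sum_ne_le_one hP i t

lemma NoHit_succ_le : ∀ k i t, NoHit P (k + 1) i t ≤ NoHit P k i t := by
  intro k
  induction k with
  | zero =>
      intro i t
      show ∑ j ∈ Finset.univ.filter (fun j => j ≠ i), P j t * NoHit P 0 i _ ≤ 1
      simp only [NoHit, mul_one]
      exact sum_ne_le_one hP i t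
  | succ k ih =>
      intro i t
      exact Finset.sum_le_sum fun j _ =>
        mul_le_mul_of_nonneg_left (ih i _) (hP.1 j t).1

lemma NoHit_anti {k l : ℕ} (h : k ≤ l) (i : Fin n) (t : Fin (r + 1) → Fin n) :
    NoHit P l i t ≤ NoHit P k i t := by
  induction l with
  | zero => simp_all
  | succ l ih =>
      rcases Nat.eq_or_lt_of_le h with h' | h'
      · rw [h']
      · exact le_trans (NoHit_succ_le hP l i t) (ih (Nat.lt_succ_iff.mp h'))

lemma fpp_nonneg : ∀ k i t, 0 ≤ fpp P k i t := by
  intro k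
  induction k with
  | zero => intro i t; exact (hP.1 i t).1
  | succ k ih =>
      intro i t
      exact Finset.sum_nonneg fun j _ => mul_nonneg (ih _ _) (hP.1 j t).1

lemma sum_fpp_eq : ∀ k i t, ∑ ℓ ∈ Finset.range k, fpp P ℓ i t = 1 - NoHit P k i t := by
  intro k
  induction k with
  | zero => intro i t; simp [NoHit]
  | succ k ih =>
      intro i t
      rw [Finset.sum_range_succ']
      have h1 : ∀ ℓ, fpp P (ℓ + 1) i t
          = ∑ j ∈ Finset.univ.filter (fun j => j ≠ i),
              fpp P ℓ i (Fin.cons j (Fin.init t)) * P j t := fun ℓ => rfl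
      simp only [h1]
      rw [Finset.sum_comm]
      have h2 : ∀ j ∈ Finset.univ.filter (fun j => j ≠ i),
          ∑ ℓ ∈ Finset.range k, fpp P ℓ i (Fin.cons j (Fin.init t)) * P j t
            = (1 - NoHit P k i (Fin.cons j (Fin.init t))) * P j t := by
        intro j _
        rw [← Finset.sum_mul, ih]
      rw [Finset.sum_congr rfl h2]
      have h3 : fpp P 0 i t = P i t := rfl
      have h4 : NoHit P (k + 1) i t
          = ∑ j ∈ Finset.univ.filter (fun j => j ≠ i),
              P j t * NoHit P k i (Fin.cons j (Fin.init t)) := rfl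
      rw [h3, h4]
      simp only [sub_mul, one_mul, Finset.sum_sub_distrib]
      rw [sum_filter_ne i (fun j => P j t), hP.2 t]
      have : ∑ j ∈ Finset.univ.filter (fun j => j ≠ i),
          NoHit P k i (Fin.cons j (Fin.init t)) * P j t
          = ∑ j ∈ Finset.univ.filter (fun j => j ≠ i),
            P j t * NoHit P k i (Fin.cons j (Fin.init t)) := by
        exact Finset.sum_congr rfl fun j _ => mul_comm _ _
      rw [this]
      ring

lemma tpow_add_NoHit_le_one : ∀ k, 1 ≤ k → ∀ i t, tpow P k i t + NoHit P k i t ≤ 1 := by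
  intro k hk
  induction k with
  | zero => omega
  | succ k ih =>
      intro i t
      rcases Nat.eq_zero_or_pos k with h0 | hpos
      · subst h0
        have h1 : tpow P 1 i t = P i t := by
          simp only [tpow, tmul]
          rw [Finset.sum_eq_single i]
          · simp [Fin.cons_zero]
          · intro j _ hj
            simp [Fin.cons_zero, hj.symm]
          · simp
        have h2 : NoHit P 1 i t = ∑ j ∈ Finset.univ.filter (fun j => j ≠ i), P j t := by
          simp only [NoHit, mul_one]
        rw [h1, h2, sum_filter_ne i (fun j => P j t), hP.2 t]
        linarith
      · have ih' := ih hpos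
        have hsplit : tpow P (k + 1) i t
            = ∑ j : Fin n, tpow P k i (Fin.cons j (Fin.init t)) * P j t := rfl
        have hN : NoHit P (k + 1) i t
            = ∑ j ∈ Finset.univ.filter (fun j => j ≠ i),
                P j t * NoHit P k i (Fin.cons j (Fin.init t)) := rfl
        rw [hsplit, hN]
        rw [← Finset.sum_erase_add _ _ (Finset.mem_univ i), Finset.filter_ne']
        have hbound : ∑ j ∈ Finset.univ.erase i, tpow P k i (Fin.cons j (Fin.init t)) * P j t
            + ∑ j ∈ Finset.univ.erase i, P j t * NoHit P k i (Fin.cons j (Fin.init t))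
            ≤ ∑ j ∈ Finset.univ.erase i, P j t := by
          rw [← Finset.sum_add_distrib]
          refine Finset.sum_le_sum fun j _ => ?_
          have := ih' i (Fin.cons j (Fin.init t))
          nlinarith [(hP.1 j t).1, tpow_nonneg hP k i (Fin.cons j (Fin.init t)),
            NoHit_nonneg hP k i (Fin.cons j (Fin.init t))]
        have hii : tpow P k i (Fin.cons i (Fin.init t)) * P i t ≤ P i t := by
          nlinarith [tpow_le_one hP k i (Fin.cons i (Fin.init t)),
            tpow_nonneg hP k i (Fin.cons i (Fin.init t)), (hP.1 i t).1]
        have hall : ∑ j ∈ Finset.univ.erase i, P j t + P i t = 1 := by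
          rw [Finset.sum_erase_add _ _ (Finset.mem_univ i)]; exact hP.2 t
        linarith

lemma NoHit_submul (i : Fin n) (L : ℕ) (M : ℝ) (hM0 : 0 ≤ M)
    (hM : ∀ t, NoHit P L i t ≤ M) :
    ∀ k t, NoHit P (k + L) i t ≤ NoHit P k i t * M := by
  intro k
  induction k with
  | zero => intro t; simpa [NoHit] using hM t
  | succ k ih =>
      intro t
      have : k + 1 + L = (k + L) + 1 := by omega
      rw [this]
      show ∑ j ∈ Finset.univ.filter (fun j => j ≠ i),
          P j t * NoHit P (k + L) i (Fin.cons j (Fin.init t)) ≤ _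
      have hstep : NoHit P (k + 1) i t * M
          = ∑ j ∈ Finset.univ.filter (fun j => j ≠ i),
              P j t * NoHit P k i (Fin.cons j (Fin.init t)) * M := by
        rw [← Finset.sum_mul]; rfl
      rw [hstep]
      refine Finset.sum_le_sum fun j _ => ?_
      rw [mul_assoc]
      exact mul_le_mul_of_nonneg_left (ih _) (hP.1 j t).1

end Aux

/-- for an ergodic chain, all ever-reaching probabilities equal one. -/
theorem ergodic_everReach_one (n r : ℕ) (hn : 2 ≤ n) (hr : 1 ≤ r)
    (P : HOTensor n r) (hP : IsStochasticT P) (herg : ErgodicT P) :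
    ∀ (i : Fin n) (t : Fin (r + 1) → Fin n), everReach P i t = 1 := by
  intro i t
  have hnpos : 0 < n := by omega
  haveI : NeZero n := ⟨by omega⟩
  set f : ℕ → ℝ := fun k => fpp P k i t with hf
  have hfnn : ∀ k, 0 ≤ f k := fun k => fpp_nonneg hP k i t
  have hpart : ∀ k, ∑ ℓ ∈ Finset.range k, f ℓ = 1 - NoHit P k i t :=
    fun k => sum_fpp_eq hP k i t
  have hble : ∀ k, ∑ ℓ ∈ Finset.range k, f ℓ ≤ 1 := by
    intro k; rw [hpart k]; linarith [NoHit_nonneg hP k i t]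
  have hs : Summable f := summable_of_sum_range_le hfnn hble
  -- key: for every window, NoHit eventually < 1
  have hkey : ∀ t' : Fin (r + 1) → Fin n, ∃ m, 1 ≤ m ∧ NoHit P m i t' < 1 := by
    intro t'
    obtain ⟨m, hm1, hmpos⟩ := herg i t'
    exact ⟨m, hm1, by linarith [tpow_add_NoHit_le_one hP m hm1 i t']⟩
  choose kk hkk1 hkk2 using hkey
  set K : ℕ := Finset.univ.sup kk with hK
  have hKlt : ∀ t', NoHit P K i t' < 1 := by
    intro t'
    exact lt_of_le_of_lt
      (NoHit_anti hP (Finset.le_sup (Finset.mem_univ t')) i t') (hkk2 t')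
  have hne : (Finset.univ : Finset (Fin (r + 1) → Fin n)).Nonempty :=
    Finset.univ_nonempty
  set M : ℝ := Finset.univ.sup' hne (fun t' => NoHit P K i t') with hM
  have hM1 : M < 1 := (Finset.sup'_lt_iff hne).mpr fun t' _ => hKlt t'
  have hMle : ∀ t', NoHit P K i t' ≤ M := fun t' =>
    Finset.le_sup' _ (Finset.mem_univ t')
  have hM0 : 0 ≤ M := le_trans (NoHit_nonneg hP K i t) (hMle t)
  -- geometric decay along multiples of K
  have hgeo : ∀ a : ℕ, ∀ t', NoHit P (a * K) i t' ≤ M ^ a := by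
    intro a
    induction a with
    | zero => intro t'; simp [NoHit]
    | succ a ih =>
        intro t'
        have : (a + 1) * K = a * K + K := by ring
        rw [this, pow_succ]
        calc NoHit P (a * K + K) i t' ≤ NoHit P (a * K) i t' * M :=
              NoHit_submul hP i K M hM0 hMle (a * K) t'
          _ ≤ M ^ a * M := mul_le_mul_of_nonneg_right (ih t') hM0
  -- tsum bounds
  have hge : ∀ a : ℕ, 1 - M ^ a ≤ ∑' k, f k := by
    intro a
    calc 1 - M ^ a ≤ 1 - NoHit P (a * K) i t := by linarith [hgeo a t]
      _ = ∑ ℓ ∈ Finset.range (a * K), f ℓ := (hpart _).symm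
      _ ≤ ∑' k, f k := Summable.sum_le_tsum _ (fun ℓ _ => hfnn ℓ) hs
  have htends : Filter.Tendsto (fun a : ℕ => 1 - M ^ a) Filter.atTop (nhds 1) := by
    have := tendsto_pow_atTop_nhds_zero_of_lt_one hM0 hM1
    have h := Filter.Tendsto.sub (tendsto_const_nhds (x := (1 : ℝ))) this
    simpa using h
  have h1le : 1 ≤ ∑' k, f k := le_of_tendsto' htends hge
  have hle1 : ∑' k, f k ≤ 1 := Summable.tsum_le_of_sum_range_le hs hble
  have : ∑' k, f k = 1 := le_antisymm hle1 h1le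
  simpa [everReach, hf] using this
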